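/- arXiv:2508.20287 — 2 statements merged into one kernel-verified Lean document; each statement's English description precedes it below -/
import Mathlib

section
/- Let W be an N×N weight matrix on ℝ satisfying W(x) = W(−x) for almost every x, with monic orthogonal polynomials {H_n}_{n≥0}, and let U(y) = y^{1/2} W(√y) be the associated weight matrix on (0,∞) with monic orthogonal polynomials {F_n}_{n≥0}. Let h_n denote the monic scalar orthogonal polynomials for the weight e^{−x²} on ℝ and ℓ_n^{(1/2)} the monic scalar orthogonal polynomials for the weight y^{1/2}e^{−y} on (0,∞). Suppose there exist a differential operator 𝒱 = Σ_{j=0}^s (d^j/dx^j) F_j(x) with N×N matrix polynomial coefficients and invertible N×N matrices A_n such that (h_n I)·𝒱 = A_n H_n for all n ≥ 0. Then there exists a differential operator ℰ̃ with N×N matrix polynomial coefficients in y such that (ℓ_n^{(1/2)} I)·ℰ̃ = A_{2n+1} F_n for all n ≥ 0; in particular, U is a Darboux transformation of the diagonal Laguerre weight y^{1/2}e^{−y} I. -/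
open MeasureTheory Polynomial Set Matrix
open scoped ComplexOrder

noncomputable section

/-- Matrix polynomials: `N × N` matrices with entries in `ℂ[X]`. -/
abbrev MatPoly (N : ℕ) := Matrix (Fin N) (Fin N) (Polynomial ℂ)

/-- Evaluation of a matrix polynomial at a real point. -/
def evalM {N : ℕ} (P : MatPoly N) (x : ℝ) : Matrix (Fin N) (Fin N) ℂ :=
  fun i j => (P i j).eval (x : ℂ)

/-- The `k`-th matrix coefficient of a matrix polynomial. -/
def coeffM {N : ℕ} (P : MatPoly N) (k : ℕ) : Matrix (Fin N) (Fin N) ℂ :=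
  fun i j => (P i j).coeff k

/-- Entrywise derivative of a matrix polynomial. -/
def derivM {N : ℕ} (P : MatPoly N) : MatPoly N :=
  fun i j => Polynomial.derivative (P i j)

/-- Entrywise iterated derivative. -/
def iterDerivM {N : ℕ} (k : ℕ) (P : MatPoly N) : MatPoly N :=
  fun i j => (fun q => Polynomial.derivative q)^[k] (P i j)

/-- Constant matrix polynomial. -/
def constM {N : ℕ} (A : Matrix (Fin N) (Fin N) ℂ) : MatPoly N :=
  A.map Polynomial.C

/-- Entrywise multiplication by the scalar polynomial `X`. -/
def XmulM {N : ℕ} (P : MatPoly N) : MatPoly N :=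
  fun i j => Polynomial.X * P i j

/-- Composition with the polynomial `X ^ 2` (the substitution `x ↦ x²`). -/
def compSqM {N : ℕ} (P : MatPoly N) : MatPoly N :=
  fun i j => (P i j).comp (Polynomial.X ^ 2)

/-- Composition with `-X` (the substitution `x ↦ -x`). -/
def reflectM {N : ℕ} (P : MatPoly N) : MatPoly N :=
  fun i j => (P i j).comp (-Polynomial.X)

/-- Right action of the matrix differential operator `D = ∑_{j=0}^s (d^j/dx^j) F j`
on a matrix polynomial: `(P · D)(x) = ∑_{j=0}^s P^{(j)}(x) F_j(x)`. -/
def applyOp {N : ℕ} (s : ℕ) (F : ℕ → MatPoly N) (P : MatPoly N) : MatPoly N :=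
  ∑ j ∈ Finset.range (s + 1), iterDerivM j P * F j

/-- Entrywise integral of a matrix-valued function over a set. -/
def matInt {N : ℕ} (I : Set ℝ) (f : ℝ → Matrix (Fin N) (Fin N) ℂ) :
    Matrix (Fin N) (Fin N) ℂ :=
  fun i j => ∫ x in I, f x i j

/-- The matrix inner product `⟨P, Q⟩_W = ∫_I P(x) W(x) Q(x)^* dx`. -/
def innerW {N : ℕ} (I : Set ℝ) (W : ℝ → Matrix (Fin N) (Fin N) ℂ)
    (P Q : MatPoly N) : Matrix (Fin N) (Fin N) ℂ :=
  matInt I (fun x => evalM P x * W x * (evalM Q x)ᴴ)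

/-- `W` is a weight matrix on the set `I ⊆ ℝ`: integrable on `I`, positive definite
almost everywhere on `I`, and with all moments finite. -/
structure IsWeight {N : ℕ} (I : Set ℝ) (W : ℝ → Matrix (Fin N) (Fin N) ℂ) : Prop where
  integrable : ∀ i j, IntegrableOn (fun x => W x i j) I
  posdef : ∀ᵐ x ∂(volume.restrict I), (W x).PosDef
  moments : ∀ (n : ℕ) (i j), IntegrableOn (fun (x : ℝ) => (x : ℂ) ^ n * W x i j) I

/-- `P` is monic of degree exactly `n` (leading coefficient the identity matrix). -/
def IsMonicDeg {N : ℕ} (P : MatPoly N) (n : ℕ) : Prop :=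
  coeffM P n = 1 ∧ ∀ k, n < k → coeffM P k = 0

/-- `P` is the sequence of monic orthogonal polynomials of the weight `W` on `I`. -/
def MonicOPS {N : ℕ} (I : Set ℝ) (W : ℝ → Matrix (Fin N) (Fin N) ℂ)
    (P : ℕ → MatPoly N) : Prop :=
  (∀ n, IsMonicDeg (P n) n) ∧ ∀ n m, n ≠ m → innerW I W (P n) (P m) = 0

/-- A (not necessarily monic) sequence of orthogonal polynomials for `W` on `I`:
degree `n` with invertible leading coefficient, pairwise orthogonal. -/
def IsOPS {N : ℕ} (I : Set ℝ) (W : ℝ → Matrix (Fin N) (Fin N) ℂ)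
    (Q : ℕ → MatPoly N) : Prop :=
  (∀ n, IsUnit (coeffM (Q n) n) ∧ ∀ k, n < k → coeffM (Q n) k = 0) ∧
  ∀ n m, n ≠ m → innerW I W (Q n) (Q m) = 0

/-- The Laguerre-type weight `V(y) = y^{-1/2} W(√y)` on `(0,∞)`. -/
def VWeight {N : ℕ} (W : ℝ → Matrix (Fin N) (Fin N) ℂ) :
    ℝ → Matrix (Fin N) (Fin N) ℂ :=
  fun y => (Real.sqrt y)⁻¹ • W (Real.sqrt y)

/-- The Laguerre-type weight `U(y) = y^{1/2} W(√y)` on `(0,∞)`. -/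
def UWeight {N : ℕ} (W : ℝ → Matrix (Fin N) (Fin N) ℂ) :
    ℝ → Matrix (Fin N) (Fin N) ℂ :=
  fun y => Real.sqrt y • W (Real.sqrt y)

/-- `p` is the sequence of monic scalar orthogonal polynomials of the scalar
weight `w` on `I`. -/
def ScalarMonicOPS (I : Set ℝ) (w : ℝ → ℝ) (p : ℕ → Polynomial ℝ) : Prop :=
  (∀ n, (p n).Monic ∧ (p n).natDegree = n) ∧
  ∀ n m, n ≠ m → ∫ x in I, (p n).eval x * (p m).eval x * w x = 0

section EvenOdd

variable {R : Type*} [CommRing R]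

/-- even part of a polynomial under `x ↦ x²` -/
def evp (f : R[X]) : R[X] :=
  ∑ k ∈ Finset.range (f.natDegree + 1), C (f.coeff (2 * k)) * X ^ k

/-- odd part -/
def odp (f : R[X]) : R[X] :=
  ∑ k ∈ Finset.range (f.natDegree + 1), C (f.coeff (2 * k + 1)) * X ^ k

lemma coeff_evp (f : R[X]) (k : ℕ) : (evp f).coeff k = f.coeff (2 * k) := by
  rw [evp, finset_sum_coeff]
  simp_rw [coeff_C_mul, coeff_X_pow, mul_ite, mul_one, mul_zero]
  rw [Finset.sum_ite_eq (Finset.range (f.natDegree + 1)) k (fun k => f.coeff (2 * k))]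
  split_ifs with h
  · rfl
  · symm
    apply coeff_eq_zero_of_natDegree_lt
    simp only [Finset.mem_range, not_lt] at h
    omega

lemma coeff_odp (f : R[X]) (k : ℕ) : (odp f).coeff k = f.coeff (2 * k + 1) := by
  rw [odp, finset_sum_coeff]
  simp_rw [coeff_C_mul, coeff_X_pow, mul_ite, mul_one, mul_zero]
  rw [Finset.sum_ite_eq (Finset.range (f.natDegree + 1)) k (fun k => f.coeff (2 * k + 1))]
  split_ifs with h
  · rfl
  · symm
    apply coeff_eq_zero_of_natDegree_lt
    simp only [Finset.mem_range, not_lt] at h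
    omega

lemma coeff_X_mul' (p : R[X]) (n : ℕ) :
    (X * p).coeff n = if n = 0 then 0 else p.coeff (n - 1) := by
  cases n with
  | zero => simp [mul_coeff_zero]
  | succ n => simp [coeff_X_mul]

lemma coeff_X_expand_even (v : R[X]) (k : ℕ) :
    (X * expand R 2 v).coeff (2 * k) = 0 := by
  rw [coeff_X_mul']
  split_ifs with h
  · rfl
  · rw [coeff_expand (by norm_num)]
    rw [if_neg]
    omega

lemma coeff_X_expand_odd (v : R[X]) (k : ℕ) :
    (X * expand R 2 v).coeff (2 * k + 1) = v.coeff k := by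
  rw [coeff_X_mul']
  rw [if_neg (by omega), coeff_expand (by norm_num)]
  rw [if_pos (by omega)]
  congr 1
  omega

lemma coeff_expand_even (v : R[X]) (k : ℕ) :
    (expand R 2 v).coeff (2 * k) = v.coeff k := by
  rw [coeff_expand (by norm_num), if_pos (by omega)]
  congr 1
  omega

lemma coeff_expand_odd (v : R[X]) (k : ℕ) :
    (expand R 2 v).coeff (2 * k + 1) = 0 := by
  rw [coeff_expand (by norm_num), if_neg (by omega)]

lemma evp_add_odp (f : R[X]) : expand R 2 (evp f) + X * expand R 2 (odp f) = f := by
  ext n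
  rcases Nat.even_or_odd n with ⟨t, ht⟩ | ⟨t, ht⟩
  · have hn : n = 2 * t := by omega
    subst hn
    rw [coeff_add, coeff_expand_even, coeff_X_expand_even, coeff_evp, add_zero]
  · have hn : n = 2 * t + 1 := by omega
    subst hn
    rw [coeff_add, coeff_expand_odd, coeff_X_expand_odd, coeff_odp, zero_add]

lemma odp_decomp (u v : R[X]) : odp (expand R 2 u + X * expand R 2 v) = v := by
  ext k
  rw [coeff_odp, coeff_add, coeff_expand_odd, coeff_X_expand_odd, zero_add]

end EvenOdd

section DerivOp

variable {R : Type*} [CommRing R]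

lemma deriv_expand_sq (q : R[X]) :
    derivative (expand R 2 q) = 2 * X * expand R 2 (derivative q) := by
  rw [derivative_expand]
  push_cast
  ring

lemma shift_helper (j : ℕ) (α β : R[X]) (c : ℕ → R[X]) (h0 : ∀ k, j < k → c k = 0)
    (p : R[X]) :
    β * (∑ k ∈ Finset.range (j + 1), derivative^[k] p * c k) +
      α * derivative (∑ k ∈ Finset.range (j + 1), derivative^[k] p * c k)
    = ∑ k ∈ Finset.range (j + 2), derivative^[k] p *
        ((β * c k + α * derivative (c k)) + (if k = 0 then 0 else α * c (k - 1))) := by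
  have hsplit : ∀ k, derivative^[k] p *
        ((β * c k + α * derivative (c k)) + (if k = 0 then 0 else α * c (k - 1)))
      = derivative^[k] p * (β * c k + α * derivative (c k)) +
        derivative^[k] p * (if k = 0 then 0 else α * c (k - 1)) := fun k => by ring
  simp only [hsplit, Finset.sum_add_distrib]
  have h1 : ∑ k ∈ Finset.range (j + 2), derivative^[k] p * (β * c k + α * derivative (c k))
      = ∑ k ∈ Finset.range (j + 1), derivative^[k] p * (β * c k + α * derivative (c k)) := by
    rw [Finset.sum_range_succ, h0 (j + 1) (by omega)]
    simp
  have h2 : ∑ k ∈ Finset.range (j + 2), derivative^[k] p * (if k = 0 then 0 else α * c (k - 1))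
      = ∑ k ∈ Finset.range (j + 1), derivative^[k+1] p * (α * c k) := by
    rw [Finset.sum_range_succ']
    simp
  rw [h1, h2, derivative_sum]
  simp only [derivative_mul, Finset.mul_sum, mul_add, Finset.sum_add_distrib,
    ← Finset.sum_add_distrib]
  apply Finset.sum_congr rfl
  intro k _
  simp only [Function.iterate_succ_apply']
  ring

/-- For every `j` there are polynomial coefficients `c k` such that
`(x p(x²))⁽ʲ⁾` equals `x·S(x²)` (j even) or `S(x²)` (j odd), where
`S = ∑ p⁽ᵏ⁾ c k`. -/
lemma exists_op (j : ℕ) : ∃ c : ℕ → R[X], (∀ k, j < k → c k = 0) ∧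
    ∀ p : R[X], derivative^[j] (X * expand R 2 p) =
      if Even j then
        X * expand R 2 (∑ k ∈ Finset.range (j + 1), derivative^[k] p * c k)
      else expand R 2 (∑ k ∈ Finset.range (j + 1), derivative^[k] p * c k) := by
  induction j with
  | zero =>
    refine ⟨fun k => if k = 0 then 1 else 0, ?_, ?_⟩
    · intro k hk
      dsimp only
      rw [if_neg (by omega)]
    · intro p
      simp
  | succ j ih =>
    obtain ⟨c, hc0, hc⟩ := ih
    by_cases hj : Even j
    · -- j even; j+1 odd: d(X·E2 S) = E2 (S + 2 X S')
      refine ⟨fun k => ((1 : R[X]) * c k + (2 * X) * derivative (c k)) +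
          (if k = 0 then 0 else (2 * X) * c (k - 1)), ?_, ?_⟩
      · intro k hk
        dsimp only
        rw [hc0 k (by omega), hc0 (k - 1) (by omega), if_neg (by omega)]
        simp
      · intro p
        have hodd : ¬ Even (j + 1) := by simp [Nat.even_add_one, hj]
        rw [Function.iterate_succ_apply', hc p, if_pos hj, if_neg hodd]
        set S := ∑ k ∈ Finset.range (j + 1), derivative^[k] p * c k with hS
        rw [derivative_mul, derivative_X, one_mul, deriv_expand_sq]
        have heq : expand R 2 S + X * (2 * X * expand R 2 (derivative S))
            = expand R 2 (1 * S + (2 * X) * derivative S) := by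
          simp only [map_add, _root_.map_mul, _root_.map_one, map_ofNat, expand_X]
          ring
        rw [heq, hS, shift_helper j (2 * X) 1 c hc0 p]
    · -- j odd; j+1 even: d(E2 S) = X·E2(2 S')
      refine ⟨fun k => ((0 : R[X]) * c k + (2 : R[X]) * derivative (c k)) +
          (if k = 0 then 0 else (2 : R[X]) * c (k - 1)), ?_, ?_⟩
      · intro k hk
        dsimp only
        rw [hc0 k (by omega), hc0 (k - 1) (by omega), if_neg (by omega)]
        simp
      · intro p
        have heven : Even (j + 1) := Nat.even_add_one.mpr hj
        rw [Function.iterate_succ_apply', hc p, if_neg hj, if_pos heven]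
        set S := ∑ k ∈ Finset.range (j + 1), derivative^[k] p * c k with hS
        rw [deriv_expand_sq]
        have heq : 2 * X * expand R 2 (derivative S)
            = X * expand R 2 (0 * S + (2 : R[X]) * derivative S) := by
          simp only [map_add, _root_.map_mul, map_zero, map_ofNat, expand_X]
          ring
        rw [heq, hS, shift_helper j 2 0 c hc0 p]

end DerivOp

section Scalar
lemma integrable_pow_gauss (n : ℕ) : Integrable (fun x : ℝ => x ^ n * Real.exp (-x ^ 2)) := by
  have h := integrable_rpow_mul_exp_neg_mul_sq (b := (1:ℝ)) one_pos
    (s := (n : ℝ)) (lt_of_lt_of_le neg_one_lt_zero (Nat.cast_nonneg n))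
  simpa [Real.rpow_natCast, neg_mul, one_mul] using h

lemma integrable_poly_gauss (q : Polynomial ℝ) :
    Integrable (fun x : ℝ => q.eval x * Real.exp (-x ^ 2)) := by
  have h : Integrable (fun x : ℝ => ∑ k ∈ Finset.range (q.natDegree + 1),
      q.coeff k * (x ^ k * Real.exp (-x ^ 2))) :=
    integrable_finset_sum _ (fun k _ => (integrable_pow_gauss k).const_mul _)
  refine h.congr (Filter.Eventually.of_forall fun x => ?_)
  dsimp only
  rw [eval_eq_sum_range, Finset.sum_mul]
  exact Finset.sum_congr rfl fun k _ => by ring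

lemma integrableOn_pow_lag (n : ℕ) :
    IntegrableOn (fun y : ℝ => y ^ n * (Real.sqrt y * Real.exp (-y))) (Set.Ioi 0) := by
  have h := Real.GammaIntegral_convergent (s := (n : ℝ) + 3/2) (by positivity)
  refine (h.congr_fun (fun x hx => ?_) measurableSet_Ioi)
  have hx0 : (0:ℝ) < x := hx
  beta_reduce
  rw [show (n:ℝ) + 3/2 - 1 = (n:ℝ) + 1/2 by ring, Real.rpow_add hx0,
    Real.rpow_natCast, ← Real.sqrt_eq_rpow]
  ring

lemma integrable_poly_lag (q : Polynomial ℝ) :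
    IntegrableOn (fun y : ℝ => q.eval y * (Real.sqrt y * Real.exp (-y))) (Set.Ioi 0) := by
  have h : IntegrableOn (fun y : ℝ => ∑ k ∈ Finset.range (q.natDegree + 1),
      q.coeff k * (y ^ k * (Real.sqrt y * Real.exp (-y)))) (Set.Ioi 0) :=
    integrable_finset_sum _ (fun k _ => (integrableOn_pow_lag k).const_mul _)
  refine h.congr (Filter.Eventually.of_forall fun y => ?_)
  dsimp only
  rw [eval_eq_sum_range, Finset.sum_mul]
  exact Finset.sum_congr rfl fun k _ => by ring

/-- Orthogonality of `p n` to everything of degree `≤ d < n`. -/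
lemma scalar_ortho {I : Set ℝ} {w : ℝ → ℝ} {p : ℕ → Polynomial ℝ}
    (hp : ScalarMonicOPS I w p)
    (hint : ∀ q r : Polynomial ℝ, IntegrableOn (fun x => q.eval x * r.eval x * w x) I) :
    ∀ d (q : Polynomial ℝ) (n : ℕ), d < n → (∀ k, d < k → q.coeff k = 0) →
      ∫ x in I, q.eval x * (p n).eval x * w x = 0 := by
  intro d
  induction d with
  | zero =>
    intro q n hn hq
    have hq' : q = Polynomial.C (q.coeff 0) := by
      ext k
      cases k with
      | zero => simp
      | succ k => simp [coeff_C, hq (k+1) (by omega)]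
    have hp0 : p 0 = 1 := ((hp.1 0).1.natDegree_eq_zero).mp (hp.1 0).2
    have hx : ∀ x : ℝ, q.eval x * (p n).eval x * w x
        = q.coeff 0 * ((p 0).eval x * (p n).eval x * w x) := by
      intro x
      conv_lhs => rw [hq']
      rw [hp0]
      simp only [eval_C, eval_one]
      ring
    simp_rw [hx]
    rw [MeasureTheory.integral_const_mul, hp.2 0 n (by omega), mul_zero]
  | succ d ihd =>
    intro q n hn hq
    set cc := q.coeff (d+1) with hcc
    have hdeg : (p (d+1)).natDegree = d+1 := (hp.1 (d+1)).2
    have hlead : (p (d+1)).coeff (d+1) = 1 := by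
      have h1 := (hp.1 (d+1)).1.coeff_natDegree
      rwa [hdeg] at h1
    set q' := q - Polynomial.C cc * p (d+1) with hq'
    have hq'c : ∀ k, d < k → q'.coeff k = 0 := by
      intro k hk
      rw [hq', coeff_sub, coeff_C_mul]
      rcases eq_or_lt_of_le (Nat.succ_le_of_lt hk) with h | h
      · rw [← h, hlead, ← hcc]; simp
      · rw [hq k (by omega), coeff_eq_zero_of_natDegree_lt (by omega)]
        simp
    have hx : ∀ x : ℝ, q.eval x * (p n).eval x * w x
        = q'.eval x * (p n).eval x * w x + cc * ((p (d+1)).eval x * (p n).eval x * w x) := by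
      intro x
      rw [hq']
      simp only [eval_sub, eval_mul, eval_C]
      ring
    simp_rw [hx]
    rw [MeasureTheory.integral_add (hint q' (p n)) (((hint (p (d+1)) (p n))).const_mul cc),
      MeasureTheory.integral_const_mul, ihd q' n (by omega) hq'c,
      hp.2 (d+1) n (by omega), mul_zero, add_zero]

lemma real_poly_ae_zero {D : Polynomial ℝ} (h : ∀ᵐ x : ℝ, D.eval x = 0) : D = 0 := by
  by_contra hD
  have hfin : {x : ℝ | Polynomial.eval x D = 0}.Finite := Polynomial.finite_setOf_isRoot hD
  have hnull : volume {x : ℝ | ¬ D.eval x = 0} = 0 := by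
    rw [Filter.eventually_iff, mem_ae_iff] at h
    exact h
  have : (volume : Measure ℝ) Set.univ ≤ volume {x : ℝ | D.eval x = 0}
      + volume {x : ℝ | ¬ D.eval x = 0} := by
    rw [show (Set.univ : Set ℝ) = {x : ℝ | D.eval x = 0} ∪ {x : ℝ | ¬ D.eval x = 0} by
      ext x; simp [em]]
    exact measure_union_le _ _
  rw [hnull, hfin.countable.measure_zero, Real.volume_univ] at this
  simp at this

lemma cplx_poly_ae_zero {D : Polynomial ℂ} (h : ∀ᵐ x : ℝ, D.eval (x : ℂ) = 0) : D = 0 := by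
  have hinf : {x : ℝ | D.eval (x : ℂ) = 0}.Infinite := by
    intro hfin
    have hnull : volume {x : ℝ | ¬ D.eval (x:ℂ) = 0} = 0 := by
      rw [Filter.eventually_iff, mem_ae_iff] at h
      exact h
    have : (volume : Measure ℝ) Set.univ ≤ volume {x : ℝ | D.eval (x:ℂ) = 0}
        + volume {x : ℝ | ¬ D.eval (x:ℂ) = 0} := by
      rw [show (Set.univ : Set ℝ) = {x : ℝ | D.eval (x:ℂ) = 0} ∪ {x : ℝ | ¬ D.eval (x:ℂ) = 0} by
        ext x; simp [em]]
      exact measure_union_le _ _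
    rw [hnull, hfin.countable.measure_zero, Real.volume_univ] at this
    simp at this
  apply D.eq_zero_of_infinite_isRoot
  have himg : ((fun x : ℝ => (x : ℂ)) '' {x : ℝ | D.eval (x : ℂ) = 0}).Infinite :=
    hinf.image (fun a _ b _ hab => Complex.ofReal_injective hab)
  refine himg.mono ?_
  rintro z ⟨x, hx, rfl⟩
  exact hx

/-- The odd monic orthogonal polynomials for an even scalar weight come from the
half-line Laguerre-type weight. -/
lemma keyA {h ℓ : ℕ → Polynomial ℝ}
    (hh : ScalarMonicOPS Set.univ (fun x => Real.exp (-x ^ 2)) h)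
    (hℓ : ScalarMonicOPS (Set.Ioi 0) (fun y => Real.sqrt y * Real.exp (-y)) ℓ)
    (m : ℕ) : h (2*m+1) = X * expand ℝ 2 (ℓ m) := by
  set w : ℝ → ℝ := fun x => Real.exp (-x ^ 2) with hw
  have hintG : ∀ q r : Polynomial ℝ,
      IntegrableOn (fun x => q.eval x * r.eval x * w x) Set.univ := by
    intro q r
    rw [integrableOn_univ]
    refine (integrable_poly_gauss (q * r)).congr (Filter.Eventually.of_forall fun x => ?_)
    simp only [hw, eval_mul]
  have hintL : ∀ q r : Polynomial ℝ,
      IntegrableOn (fun y => q.eval y * r.eval y * (Real.sqrt y * Real.exp (-y))) (Set.Ioi 0) := by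
    intro q r
    refine (integrable_poly_lag (q * r)).congr (Filter.Eventually.of_forall fun y => ?_)
    simp only [eval_mul]
  set Λ : Polynomial ℝ := X * expand ℝ 2 (ℓ m) with hΛ
  set D : Polynomial ℝ := h (2*m+1) - Λ with hD
  -- coefficients of D vanish above 2m
  have hdegh : (h (2*m+1)).natDegree = 2*m+1 := (hh.1 (2*m+1)).2
  have hDcoeff : ∀ k, 2*m < k → D.coeff k = 0 := by
    intro k hk
    rw [hD, coeff_sub, hΛ]
    rcases Nat.even_or_odd k with ⟨t, ht⟩ | ⟨t, ht⟩
    · have hk2 : k = 2 * t := by omega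
      subst hk2
      rw [coeff_X_expand_even, coeff_eq_zero_of_natDegree_lt (by omega)]
      simp
    · have hk2 : k = 2 * t + 1 := by omega
      subst hk2
      rw [coeff_X_expand_odd]
      rcases eq_or_lt_of_le (show m ≤ t by omega) with hm | hm
      · rw [← hm]
        have h1 : (h (2*m+1)).coeff (2*m+1) = 1 := by
          have h1' := (hh.1 (2*m+1)).1.coeff_natDegree
          rwa [hdegh] at h1'
        have h2 : (ℓ m).coeff m = 1 := by
          have h2' := (hℓ.1 m).1.coeff_natDegree
          rwa [(hℓ.1 m).2] at h2'
        rw [h1, h2, sub_self]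
      · rw [coeff_eq_zero_of_natDegree_lt (by omega),
          coeff_eq_zero_of_natDegree_lt (by rw [(hℓ.1 m).2]; omega)]
        simp
  -- orthogonality of D to everything of degree ≤ 2m
  have horth : ∀ q : Polynomial ℝ, (∀ k, 2*m < k → q.coeff k = 0) →
      ∫ x, D.eval x * q.eval x * w x = 0 := by
    intro q hq
    have hsub : ∀ x : ℝ, D.eval x * q.eval x * w x
        = (h (2*m+1)).eval x * q.eval x * w x - Λ.eval x * q.eval x * w x := by
      intro x; rw [hD]; simp only [eval_sub]; ring
    simp_rw [hsub]
    have hint1 : Integrable (fun x => (h (2*m+1)).eval x * q.eval x * w x) := by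
      have := hintG (h (2*m+1)) q; rwa [integrableOn_univ] at this
    have hint2 : Integrable (fun x => Λ.eval x * q.eval x * w x) := by
      have := hintG Λ q; rwa [integrableOn_univ] at this
    rw [MeasureTheory.integral_sub hint1 hint2]
    have part1 : ∫ x, (h (2*m+1)).eval x * q.eval x * w x = 0 := by
      have hcomm : ∀ x : ℝ, (h (2*m+1)).eval x * q.eval x * w x
          = q.eval x * (h (2*m+1)).eval x * w x := fun x => by ring
      simp_rw [hcomm]
      have := scalar_ortho hh hintG (2*m) q (2*m+1) (by omega) hq
      rwa [MeasureTheory.setIntegral_univ] at this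
    -- now the Λ part
    have part2 : ∫ x, Λ.eval x * q.eval x * w x = 0 := by
      have hdecomp := evp_add_odp q
      have hsplit2 : ∀ x : ℝ, Λ.eval x * q.eval x * w x
          = Λ.eval x * (expand ℝ 2 (evp q)).eval x * w x
            + Λ.eval x * (X * expand ℝ 2 (odp q)).eval x * w x := by
        intro x
        conv_lhs => rw [← hdecomp]
        simp only [eval_add]
        ring
      simp_rw [hsplit2]
      have hint3 : Integrable (fun x => Λ.eval x * (expand ℝ 2 (evp q)).eval x * w x) := by
        have := hintG Λ (expand ℝ 2 (evp q)); rwa [integrableOn_univ] at this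
      have hint4 : Integrable (fun x => Λ.eval x * (X * expand ℝ 2 (odp q)).eval x * w x) := by
        have := hintG Λ (X * expand ℝ 2 (odp q)); rwa [integrableOn_univ] at this
      rw [MeasureTheory.integral_add hint3 hint4]
      -- odd part: integrand is an odd function
      have hΛodd : ∀ x : ℝ, Λ.eval (-x) = - Λ.eval x := by
        intro x
        simp only [hΛ, eval_mul, eval_X, expand_eval, neg_sq]
        ring
      have hweven : ∀ x : ℝ, w (-x) = w x := by intro x; rw [hw]; simp
      have g1odd : ∀ x : ℝ, Λ.eval (-(x:ℝ)) * (expand ℝ 2 (evp q)).eval (-x) * w (-x)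
          = -(Λ.eval x * (expand ℝ 2 (evp q)).eval x * w x) := by
        intro x
        rw [hΛodd, hweven]
        simp only [expand_eval, neg_sq]
        ring
      have hzero1 : ∫ x, Λ.eval x * (expand ℝ 2 (evp q)).eval x * w x = 0 := by
        have hni := integral_neg_eq_self
          (fun x : ℝ => Λ.eval x * (expand ℝ 2 (evp q)).eval x * w x) (volume : Measure ℝ)
        simp_rw [g1odd, MeasureTheory.integral_neg] at hni
        linarith
      rw [hzero1, zero_add]
      -- even part: substitute y = x²
      set g2 : ℝ → ℝ := fun x => Λ.eval x * (X * expand ℝ 2 (odp q)).eval x * w x with hg2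
      have g2even : ∀ x : ℝ, g2 (-x) = g2 x := by
        intro x
        rw [hg2]
        simp only
        rw [hΛodd, hweven]
        simp only [eval_mul, eval_X, expand_eval, neg_sq]
        ring
      have hIoi : ∫ x in Set.Ioi (0:ℝ), g2 x = 0 := by
        set f : ℝ → ℝ := fun y =>
          (1/2) * ((odp q).eval y * (ℓ m).eval y * (Real.sqrt y * Real.exp (-y))) with hf
        have hsubst := integral_comp_rpow_Ioi f (p := 2) (by norm_num)
        have hpt : ∀ x ∈ Set.Ioi (0:ℝ), (|(2:ℝ)| * x ^ ((2:ℝ) - 1)) • f (x ^ (2:ℝ)) = g2 x := by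
          intro x hx
          have hx0 : (0:ℝ) < x := hx
          rw [show ((2:ℝ) - 1) = 1 by norm_num, Real.rpow_one,
            show (x:ℝ) ^ (2:ℝ) = x ^ 2 by
              rw [show (2:ℝ) = ((2:ℕ):ℝ) by norm_num, Real.rpow_natCast],
            hf, hg2, hΛ]
          simp only [smul_eq_mul, eval_mul, eval_X, expand_eval]
          rw [Real.sqrt_sq hx0.le, hw]
          simp only [abs_two]
          ring
        have h1 : ∫ x in Set.Ioi (0:ℝ), g2 x = ∫ y in Set.Ioi (0:ℝ), f y := by
          rw [← hsubst]
          exact (setIntegral_congr_fun measurableSet_Ioi (fun x hx => (hpt x hx).symm))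
        rw [h1, hf]
        simp_rw [MeasureTheory.integral_const_mul]
        rcases Nat.eq_zero_or_pos m with hm | hm
        · have hoq : odp q = 0 := by
            ext k
            rw [coeff_odp, hq (2*k+1) (by omega), coeff_zero]
          rw [hoq]
          simp
        · have hoqc : ∀ k, m - 1 < k → (odp q).coeff k = 0 := by
            intro k hk
            rw [coeff_odp, hq (2*k+1) (by omega)]
          rw [scalar_ortho hℓ hintL (m-1) (odp q) m (by omega) hoqc, mul_zero]
      have hsplitline : ∫ x, g2 x = (∫ x in Set.Iic (0:ℝ), g2 x) + ∫ x in Set.Ioi (0:ℝ), g2 x := by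
        rw [intervalIntegral.integral_Iic_add_Ioi (hint4.integrableOn) (hint4.integrableOn)]
      have hIic : ∫ x in Set.Iic (0:ℝ), g2 x = ∫ x in Set.Ioi (0:ℝ), g2 x := by
        have := integral_comp_neg_Iic (0:ℝ) g2
        rw [neg_zero] at this
        rw [← this]
        exact MeasureTheory.integral_congr_ae (Filter.Eventually.of_forall fun x => (g2even x).symm)
      change ∫ x, g2 x = 0
      rw [hsplitline, hIic, hIoi, add_zero]
    rw [part1, part2, sub_zero]
  -- conclude : ∫ D·D·w = 0, D = 0
  have hDD : ∫ x, D.eval x * D.eval x * w x = 0 := horth D hDcoeff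
  have hnn : 0 ≤ (fun x : ℝ => D.eval x * D.eval x * w x) := by
    intro x
    exact mul_nonneg (mul_self_nonneg _) (le_of_lt (Real.exp_pos _))
  have hinteg : Integrable (fun x : ℝ => D.eval x * D.eval x * w x) := by
    have := hintG D D; rwa [integrableOn_univ] at this
  have hae : (fun x : ℝ => D.eval x * D.eval x * w x) =ᵐ[volume] 0 := by
    rw [← MeasureTheory.integral_eq_zero_iff_of_nonneg hnn hinteg]
    exact hDD
  have hae0 : ∀ᵐ x : ℝ, D.eval x = 0 := by
    filter_upwards [hae] with x hx
    simp only [Pi.zero_apply] at hx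
    rcases mul_eq_zero.mp hx with h2 | h2
    · exact mul_self_eq_zero.mp h2
    · exact absurd h2 (Real.exp_pos _).ne'
  have hfin : D = 0 := real_poly_ae_zero hae0
  rw [hD, sub_eq_zero] at hfin
  exact hfin

end Scalar

section MatrixSide
variable {N : ℕ}

/-- entry integrand of the matrix inner product -/
def igW (Wf : ℝ → Matrix (Fin N) (Fin N) ℂ) (P Q : MatPoly N) (i j : Fin N) (x : ℝ) : ℂ :=
  ∑ b, (∑ a, (P i a).eval (x:ℂ) * Wf x a b) * star ((Q j b).eval (x:ℂ))

lemma innerW_apply (I : Set ℝ) (Wf : ℝ → Matrix (Fin N) (Fin N) ℂ) (P Q : MatPoly N)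
    (i j : Fin N) : innerW I Wf P Q i j = ∫ x in I, igW Wf P Q i j x := by
  refine MeasureTheory.integral_congr_ae (Filter.Eventually.of_forall fun x => ?_)
  show (evalM P x * Wf x * (evalM Q x)ᴴ) i j = _
  rw [Matrix.mul_apply]
  refine Finset.sum_congr rfl fun b _ => ?_
  rw [Matrix.mul_apply, Matrix.conjTranspose_apply]
  rfl

lemma star_eval (q : Polynomial ℂ) (x : ℝ) :
    star (q.eval (x:ℂ)) = (q.map (starRingEnd ℂ)).eval (x:ℂ) := by
  calc star (q.eval (x:ℂ)) = (starRingEnd ℂ) (q.eval₂ (RingHom.id ℂ) (x:ℂ)) := rfl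
    _ = q.eval₂ ((starRingEnd ℂ).comp (RingHom.id ℂ)) ((starRingEnd ℂ) (x:ℂ)) :=
        Polynomial.hom_eval₂ _ _ _ _
    _ = q.eval₂ (starRingEnd ℂ) (x:ℂ) := by rw [RingHom.comp_id, Complex.conj_ofReal]
    _ = (q.map (starRingEnd ℂ)).eval (x:ℂ) := (Polynomial.eval_map _ _).symm

lemma int_entry {I : Set ℝ} {Wf : ℝ → Matrix (Fin N) (Fin N) ℂ}
    (hmom : ∀ (n : ℕ) (a b : Fin N), IntegrableOn (fun x : ℝ => (x:ℂ)^n * Wf x a b) I)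
    (r : Polynomial ℂ) (a b : Fin N) :
    IntegrableOn (fun x : ℝ => r.eval (x:ℂ) * Wf x a b) I := by
  have h : IntegrableOn (fun x : ℝ => ∑ k ∈ Finset.range (r.natDegree + 1),
      r.coeff k * ((x:ℂ)^k * Wf x a b)) I :=
    integrable_finset_sum _ (fun k _ => (hmom k a b).const_mul _)
  refine h.congr (Filter.Eventually.of_forall fun x => ?_)
  dsimp only
  rw [Polynomial.eval_eq_sum_range, Finset.sum_mul]
  exact Finset.sum_congr rfl fun k _ => by ring

lemma int_igW {I : Set ℝ} {Wf : ℝ → Matrix (Fin N) (Fin N) ℂ}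
    (hmom : ∀ (n : ℕ) (a b : Fin N), IntegrableOn (fun x : ℝ => (x:ℂ)^n * Wf x a b) I)
    (P Q : MatPoly N) (i j : Fin N) : IntegrableOn (igW Wf P Q i j) I := by
  have heq : igW Wf P Q i j = fun x : ℝ => ∑ b, ∑ a,
      ((P i a) * ((Q j b).map (starRingEnd ℂ))).eval (x:ℂ) * Wf x a b := by
    funext x
    unfold igW
    refine Finset.sum_congr rfl fun b _ => ?_
    rw [Finset.sum_mul]
    refine Finset.sum_congr rfl fun a _ => ?_
    rw [Polynomial.eval_mul, ← star_eval]
    ring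
  rw [heq]
  exact integrable_finset_sum _ (fun b _ => integrable_finset_sum _
    (fun a _ => int_entry hmom _ a b))

lemma igW_add_right (Wf : ℝ → Matrix (Fin N) (Fin N) ℂ) (P Q1 Q2 : MatPoly N) (i j : Fin N)
    (x : ℝ) : igW Wf P (Q1 + Q2) i j x = igW Wf P Q1 i j x + igW Wf P Q2 i j x := by
  unfold igW
  rw [← Finset.sum_add_distrib]
  refine Finset.sum_congr rfl fun b _ => ?_
  rw [Matrix.add_apply, Polynomial.eval_add, star_add]
  ring

lemma igW_sub_left (Wf : ℝ → Matrix (Fin N) (Fin N) ℂ) (P1 P2 Q : MatPoly N) (i j : Fin N)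
    (x : ℝ) : igW Wf (P1 - P2) Q i j x = igW Wf P1 Q i j x - igW Wf P2 Q i j x := by
  unfold igW
  rw [← Finset.sum_sub_distrib]
  refine Finset.sum_congr rfl fun b _ => ?_
  rw [← sub_mul, ← Finset.sum_sub_distrib]
  congr 1
  refine Finset.sum_congr rfl fun a _ => ?_
  rw [Matrix.sub_apply, Polynomial.eval_sub]
  ring

lemma coeffM_constM_mul (C : Matrix (Fin N) (Fin N) ℂ) (P : MatPoly N) (k : ℕ) :
    coeffM (constM C * P) k = C * coeffM P k := by
  funext i j
  rw [coeffM, Matrix.mul_apply]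
  show (∑ a, constM C i a * P a j).coeff k = _
  rw [Polynomial.finset_sum_coeff]
  rw [Matrix.mul_apply]
  refine Finset.sum_congr rfl fun a _ => ?_
  rw [constM, Matrix.map_apply, Polynomial.coeff_C_mul]
  rfl

lemma isMonicDeg_zero_eq_one {P : MatPoly N} (h : IsMonicDeg P 0) : P = 1 := by
  funext i j
  ext k
  cases k with
  | zero =>
    have h1 := congrFun (congrFun h.1 i) j
    rw [coeffM] at h1
    rw [h1]
    rw [Matrix.one_apply, Matrix.one_apply]
    split_ifs <;> simp
  | succ k =>
    have h1 := congrFun (congrFun (h.2 (k+1) (by omega)) i) j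
    rw [coeffM] at h1
    rw [h1]
    rw [Matrix.one_apply]
    split_ifs <;> simp [Polynomial.coeff_one]

/-- orthogonality of `P n` to all matrix polynomials of degree `≤ d < n` -/
lemma mat_ortho {I : Set ℝ} {Wf : ℝ → Matrix (Fin N) (Fin N) ℂ} {P : ℕ → MatPoly N}
    (hP : MonicOPS I Wf P)
    (hmom : ∀ (n : ℕ) (a b : Fin N), IntegrableOn (fun x : ℝ => (x:ℂ)^n * Wf x a b) I) :
    ∀ d (Q : MatPoly N) (n : ℕ), d < n → (∀ k, d < k → coeffM Q k = 0) →
      innerW I Wf (P n) Q = 0 := by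
  have key : ∀ (C : Matrix (Fin N) (Fin N) ℂ) (kk n : ℕ), n ≠ kk →
      innerW I Wf (P n) (constM C * P kk) = 0 := by
    intro C kk n hkkn
    funext i j
    rw [innerW_apply]
    have hig : ∀ x : ℝ, igW Wf (P n) (constM C * P kk) i j x
        = ∑ mm, igW Wf (P n) (P kk) i mm x * star (C j mm) := by
      intro x
      unfold igW
      have hentry : ∀ b, star (((constM C * P kk) j b).eval (x:ℂ))
          = ∑ mm, star (C j mm) * star ((P kk mm b).eval (x:ℂ)) := by
        intro b
        rw [show (constM C * P kk) j b = ∑ mm, Polynomial.C (C j mm) * P kk mm b from by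
          rw [Matrix.mul_apply]; rfl]
        rw [Polynomial.eval_finset_sum, star_sum]
        refine Finset.sum_congr rfl fun mm _ => ?_
        rw [Polynomial.eval_mul, Polynomial.eval_C, star_mul']
      simp_rw [hentry, Finset.mul_sum]
      rw [Finset.sum_comm]
      refine Finset.sum_congr rfl fun mm _ => ?_
      rw [Finset.sum_mul]
      refine Finset.sum_congr rfl fun b _ => ?_
      ring
    simp_rw [hig]
    rw [MeasureTheory.integral_finset_sum _
      (fun mm _ => (int_igW hmom (P n) (P kk) i mm).mul_const _)]
    have hz : ∀ mm : Fin N, ∫ x in I, igW Wf (P n) (P kk) i mm x = 0 := by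
      intro mm
      rw [← innerW_apply, hP.2 n kk hkkn]
      rfl
    have : ∀ mm : Fin N, (∫ x in I, igW Wf (P n) (P kk) i mm x * star (C j mm)) = 0 := by
      intro mm
      rw [MeasureTheory.integral_mul_const, hz mm, zero_mul]
    rw [Finset.sum_congr rfl fun mm _ => this mm]
    simp
  intro d
  induction d with
  | zero =>
    intro Q n hn hQ
    have hQ' : Q = constM (coeffM Q 0) * P 0 := by
      rw [isMonicDeg_zero_eq_one (hP.1 0), mul_one]
      funext i j
      ext k
      cases k with
      | zero => rw [constM, Matrix.map_apply, Polynomial.coeff_C]; rfl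
      | succ k =>
        rw [constM, Matrix.map_apply, Polynomial.coeff_C]
        have h1 := congrFun (congrFun (hQ (k+1) (by omega)) i) j
        rw [coeffM] at h1
        rw [h1]
        simp
    rw [hQ']
    exact key _ 0 n (by omega)
  | succ d ihd =>
    intro Q n hn hQ
    set C := coeffM Q (d+1) with hC
    set Q' := Q - constM C * P (d+1) with hQ'
    have hQ'c : ∀ k, d < k → coeffM Q' k = 0 := by
      intro k hk
      have hsub : coeffM Q' k = coeffM Q k - C * coeffM (P (d+1)) k := by
        rw [hQ']
        funext i j
        rw [coeffM]
        show (Q i j - (constM C * P (d+1)) i j).coeff k = _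
        rw [Polynomial.coeff_sub]
        have := congrFun (congrFun (coeffM_constM_mul C (P (d+1)) k) i) j
        rw [coeffM] at this
        rw [this]
        rfl
      rw [hsub]
      rcases eq_or_lt_of_le (Nat.succ_le_of_lt hk) with h | h
      · rw [← h, ← hC, (hP.1 (d+1)).1, mul_one, sub_self]
      · rw [hQ k (by omega), (hP.1 (d+1)).2 k (by omega), mul_zero, sub_zero]
    have hQsum : Q = Q' + constM C * P (d+1) := by rw [hQ', sub_add_cancel]
    funext i j
    rw [innerW_apply]
    have hsplit : ∀ x : ℝ, igW Wf (P n) Q i j x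
        = igW Wf (P n) Q' i j x + igW Wf (P n) (constM C * P (d+1)) i j x := by
      intro x
      conv_lhs => rw [hQsum]
      exact igW_add_right _ _ _ _ _ _ _
    simp_rw [hsplit]
    rw [MeasureTheory.integral_add (int_igW hmom _ _ i j) (int_igW hmom _ _ i j)]
    have h1 := congrFun (congrFun (ihd Q' n (by omega) hQ'c) i) j
    rw [innerW_apply] at h1
    have h2 := congrFun (congrFun (key C (d+1) n (by omega)) i) j
    rw [innerW_apply] at h2
    rw [h1, h2]
    simp

lemma U_moments (W : ℝ → Matrix (Fin N) (Fin N) ℂ) (hW : IsWeight Set.univ W) :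
    ∀ (n : ℕ) (a b : Fin N),
      IntegrableOn (fun y : ℝ => (y:ℂ)^n * UWeight W y a b) (Set.Ioi 0) := by
  intro n a b
  rw [← integrableOn_Ioi_comp_rpow_iff (fun y : ℝ => (y:ℂ)^n * UWeight W y a b)
    (p := 2) (by norm_num)]
  have hbase : IntegrableOn (fun x : ℝ => (2:ℂ) * ((x:ℂ)^(2*n+2) * W x a b)) (Set.Ioi 0) :=
    ((hW.moments (2*n+2) a b).mono_set (Set.subset_univ _)).const_mul _
  refine hbase.congr_fun (fun x hx => ?_) measurableSet_Ioi
  have hx0 : (0:ℝ) < x := hx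
  have hx2 : x ^ (2:ℝ) = x ^ 2 := by
    rw [show (2:ℝ) = ((2:ℕ):ℝ) by norm_num, Real.rpow_natCast]
  have h21 : x ^ ((2:ℝ) - 1) = x := by norm_num
  show (2:ℂ) * ((x:ℂ)^(2*n+2) * W x a b)
      = (|(2:ℝ)| * x ^ ((2:ℝ) - 1)) • (((x ^ (2:ℝ) : ℝ) : ℂ)^n * UWeight W (x ^ (2:ℝ)) a b)
  rw [hx2, h21, abs_two]
  unfold UWeight
  rw [Matrix.smul_apply, Real.sqrt_sq hx0.le, Complex.real_smul, Complex.real_smul]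
  push_cast
  ring

lemma matpoly_zero_of_ae {D : MatPoly N}
    (h : ∀ᵐ x : ℝ, ∀ a b : Fin N, (D a b).eval (x:ℂ) = 0) : D = 0 := by
  funext a b
  refine cplx_poly_ae_zero ?_
  filter_upwards [h] with x hx
  exact hx a b

/-- key B : the odd monic matrix OPS of an even matrix weight, versus the `U` weight. -/
lemma keyB (W : ℝ → Matrix (Fin N) (Fin N) ℂ) (hW : IsWeight Set.univ W)
    (hsymm : ∀ᵐ x : ℝ, W x = W (-x))
    (H : ℕ → MatPoly N) (hH : MonicOPS Set.univ W H)
    (Fp : ℕ → MatPoly N) (hFp : MonicOPS (Set.Ioi 0) (UWeight W) Fp) (m : ℕ) :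
    H (2*m+1) = XmulM (compSqM (Fp m)) := by
  have hmomW : ∀ (n : ℕ) (a b : Fin N),
      IntegrableOn (fun x : ℝ => (x:ℂ)^n * W x a b) Set.univ := hW.moments
  have hmomU := U_moments W hW
  set Λ : MatPoly N := XmulM (compSqM (Fp m)) with hΛ
  have hΛentry : ∀ i j : Fin N, Λ i j = X * expand ℂ 2 (Fp m i j) := fun i j => rfl
  set D : MatPoly N := H (2*m+1) - Λ with hD
  have hDentry : ∀ i j : Fin N, D i j = H (2*m+1) i j - Λ i j := fun i j => rfl
  have hΛvalneg : ∀ (i a : Fin N) (x : ℝ),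
      (Λ i a).eval ((-x : ℝ):ℂ) = -((Λ i a).eval (x:ℂ)) := by
    intro i a x
    rw [hΛentry]
    simp only [Complex.ofReal_neg, Polynomial.eval_mul, Polynomial.eval_X,
      Polynomial.expand_eval, neg_sq]
    ring
  have hCSval : ∀ (R : MatPoly N) (j b : Fin N) (x : ℝ),
      (compSqM R j b).eval ((-x:ℝ):ℂ) = (compSqM R j b).eval (x:ℂ) := by
    intro R j b x
    show ((R j b).comp (X^2)).eval _ = ((R j b).comp (X^2)).eval _
    simp only [Polynomial.eval_comp, Polynomial.eval_pow, Polynomial.eval_X,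
      Complex.ofReal_neg, neg_sq]
  have hXCSval : ∀ (R : MatPoly N) (j b : Fin N) (x : ℝ),
      (XmulM (compSqM R) j b).eval ((-x:ℝ):ℂ) = -((XmulM (compSqM R) j b).eval (x:ℂ)) := by
    intro R j b x
    show ((X : Polynomial ℂ) * (R j b).comp (X^2)).eval ((-x:ℝ):ℂ) = -(((X : Polynomial ℂ) * (R j b).comp (X^2)).eval ((x:ℝ):ℂ))
    simp only [Polynomial.eval_mul, Polynomial.eval_comp, Polynomial.eval_pow,
      Polynomial.eval_X, Complex.ofReal_neg, neg_sq]
    ring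
  -- coefficients of D vanish above 2m
  have hHc : ∀ k, 2*m+1 < k → ∀ i j : Fin N, (H (2*m+1) i j).coeff k = 0 := by
    intro k hk i j
    have h0 := congrFun (congrFun ((hH.1 (2*m+1)).2 k hk) i) j
    simpa [coeffM] using h0
  have hDcoeff : ∀ k, 2*m < k → coeffM D k = 0 := by
    intro k hk
    funext i j
    show (D i j).coeff k = (0 : Matrix (Fin N) (Fin N) ℂ) i j
    rw [hDentry, Polynomial.coeff_sub, hΛentry, Matrix.zero_apply]
    rcases Nat.even_or_odd k with ⟨t, ht⟩ | ⟨t, ht⟩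
    · have hk2 : k = 2 * t := by omega
      subst hk2
      rw [coeff_X_expand_even, hHc _ (by omega) i j, sub_zero]
    · have hk2 : k = 2 * t + 1 := by omega
      subst hk2
      rw [coeff_X_expand_odd]
      rcases eq_or_lt_of_le (show m ≤ t by omega) with hm | hm
      · subst hm
        have h1 := congrFun (congrFun (hH.1 (2*m+1)).1 i) j
        rw [coeffM] at h1
        have h2 := congrFun (congrFun (hFp.1 m).1 i) j
        rw [coeffM] at h2
        rw [h1, h2, sub_self]
      · rw [hHc _ (by omega) i j]
        have h2 : (Fp m i j).coeff t = 0 := by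
          simpa [coeffM] using congrFun (congrFun ((hFp.1 m).2 t (by omega)) i) j
        rw [h2, sub_zero]
  -- orthogonality of the H part
  have horthH : ∀ Q : MatPoly N, (∀ k, 2*m < k → coeffM Q k = 0) →
      innerW Set.univ W (H (2*m+1)) Q = 0 :=
    fun Q hQ => mat_ortho hH hmomW (2*m) Q (2*m+1) (by omega) hQ
  -- orthogonality of the Λ part
  have horthΛ : ∀ Q : MatPoly N, (∀ k, 2*m < k → coeffM Q k = 0) →
      innerW Set.univ W Λ Q = 0 := by
    intro Q hQ
    set Qe : MatPoly N := fun i j => evp (Q i j) with hQe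
    set Qo : MatPoly N := fun i j => odp (Q i j) with hQo
    have hQdec : Q = compSqM Qe + XmulM (compSqM Qo) := by
      funext i j
      show Q i j = expand ℂ 2 (evp (Q i j)) + X * expand ℂ 2 (odp (Q i j))
      exact (evp_add_odp (Q i j)).symm
    funext i j
    show innerW Set.univ W Λ Q i j = (0 : Matrix (Fin N) (Fin N) ℂ) i j
    rw [innerW_apply, Matrix.zero_apply]
    have hsplit : ∀ x : ℝ, igW W Λ Q i j x
        = igW W Λ (compSqM Qe) i j x + igW W Λ (XmulM (compSqM Qo)) i j x := by
      intro x
      conv_lhs => rw [hQdec]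
      exact igW_add_right W Λ _ _ i j x
    simp_rw [hsplit]
    rw [MeasureTheory.integral_add (int_igW hmomW _ _ i j) (int_igW hmomW _ _ i j),
      MeasureTheory.setIntegral_univ, MeasureTheory.setIntegral_univ]
    -- part 1 : odd integrand, integral vanishes
    have hodd : ∀ᵐ x : ℝ, igW W Λ (compSqM Qe) i j (-x) = - igW W Λ (compSqM Qe) i j x := by
      filter_upwards [hsymm] with x hx
      unfold igW
      rw [← Finset.sum_neg_distrib]
      refine Finset.sum_congr rfl fun b _ => ?_
      rw [← hx, hCSval Qe j b x]
      rw [show (∑ a, (Λ i a).eval ((-x:ℝ):ℂ) * W x a b)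
          = -(∑ a, (Λ i a).eval (x:ℂ) * W x a b) from by
        rw [← Finset.sum_neg_distrib]
        refine Finset.sum_congr rfl fun a _ => ?_
        rw [hΛvalneg i a x]; ring]
      ring
    have hzero1 : (∫ x : ℝ, igW W Λ (compSqM Qe) i j x) = 0 := by
      have h1 := integral_neg_eq_self (igW W Λ (compSqM Qe) i j) (volume : Measure ℝ)
      have h2 : (∫ x : ℝ, igW W Λ (compSqM Qe) i j (-x))
          = ∫ x : ℝ, - igW W Λ (compSqM Qe) i j x := MeasureTheory.integral_congr_ae hodd
      rw [MeasureTheory.integral_neg] at h2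
      have h3 : (∫ x : ℝ, igW W Λ (compSqM Qe) i j x)
          = - ∫ x : ℝ, igW W Λ (compSqM Qe) i j x := h1.symm.trans h2
      have h4 : (2:ℂ) * ∫ x : ℝ, igW W Λ (compSqM Qe) i j x = 0 := by
        linear_combination h3
      exact (mul_eq_zero.mp h4).resolve_left two_ne_zero
    rw [hzero1, zero_add]
    -- part 2 : even integrand, reduce to the U weight on (0,∞)
    set g2 : ℝ → ℂ := igW W Λ (XmulM (compSqM Qo)) i j with hg2
    have hg2int : Integrable g2 := by
      have := int_igW hmomW Λ (XmulM (compSqM Qo)) i j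
      rwa [integrableOn_univ] at this
    have heven : ∀ᵐ x : ℝ, g2 (-x) = g2 x := by
      filter_upwards [hsymm] with x hx
      rw [hg2]
      unfold igW
      refine Finset.sum_congr rfl fun b _ => ?_
      rw [← hx, hXCSval Qo j b x]
      rw [show (∑ a, (Λ i a).eval ((-x:ℝ):ℂ) * W x a b)
          = -(∑ a, (Λ i a).eval (x:ℂ) * W x a b) from by
        rw [← Finset.sum_neg_distrib]
        refine Finset.sum_congr rfl fun a _ => ?_
        rw [hΛvalneg i a x]; ring]
      rw [star_neg]
      ring
    have hIoi : (∫ x in Set.Ioi (0:ℝ), g2 x) = 0 := by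
      have hUinner : innerW (Set.Ioi 0) (UWeight W) (Fp m) Qo i j = 0 := by
        rcases Nat.eq_zero_or_pos m with hm | hm
        · have hQo0 : Qo = 0 := by
            funext a' b'
            show odp (Q a' b') = (0 : MatPoly N) a' b'
            ext k
            rw [coeff_odp]
            have h0 : (Q a' b').coeff (2*k+1) = 0 := by
              simpa [coeffM] using congrFun (congrFun (hQ (2*k+1) (by omega)) a') b'
            rw [h0]
            simp
          rw [innerW_apply]
          have hzz : ∀ x : ℝ, igW (UWeight W) (Fp m) Qo i j x = 0 := by
            intro x
            unfold igW
            rw [hQo0]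
            simp
          simp_rw [hzz]
          simp
        · have hQoc : ∀ k, m - 1 < k → coeffM Qo k = 0 := by
            intro k hk
            funext a' b'
            show (odp (Q a' b')).coeff k = (0 : Matrix (Fin N) (Fin N) ℂ) a' b'
            rw [coeff_odp, Matrix.zero_apply]
            have h0 : (Q a' b').coeff (2*k+1) = 0 := by
              simpa [coeffM] using congrFun (congrFun (hQ (2*k+1) (by omega)) a') b'
            rw [h0]
          have h0 := congrFun (congrFun
            (mat_ortho hFp hmomU (m-1) Qo m (by omega) hQoc) i) j
          simpa using h0
      set f : ℝ → ℂ := fun y => (2⁻¹ : ℝ) • igW (UWeight W) (Fp m) Qo i j y with hf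
      have hsubst := integral_comp_rpow_Ioi f (p := 2) (by norm_num)
      have hpt : ∀ x ∈ Set.Ioi (0:ℝ), (|(2:ℝ)| * x ^ ((2:ℝ)-1)) • f (x ^ (2:ℝ)) = g2 x := by
        intro x hx
        have hx0 : (0:ℝ) < x := hx
        have hx2 : x ^ (2:ℝ) = x ^ 2 := by
          rw [show (2:ℝ) = ((2:ℕ):ℝ) by norm_num, Real.rpow_natCast]
        have h21 : x ^ ((2:ℝ)-1) = x := by norm_num
        rw [hx2, h21, abs_two, hf, hg2]
        unfold igW
        rw [smul_smul, show (2:ℝ) * x * 2⁻¹ = x by ring, Finset.smul_sum]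
        refine Finset.sum_congr rfl fun b _ => ?_
        have hQoeval : ((XmulM (compSqM Qo)) j b).eval (x:ℂ) = (x:ℂ) * (Qo j b).eval ((x:ℂ)^2) := by
          show (X * (Qo j b).comp (X^2)).eval _ = _
          simp [Polynomial.eval_mul, Polynomial.eval_comp]
        have hQoeval2 : (Qo j b).eval (((x^2 : ℝ)):ℂ) = (Qo j b).eval ((x:ℂ)^2) := by
          push_cast; rfl
        have hΛeval : ∀ a, (Λ i a).eval (x:ℂ) = (x:ℂ) * (Fp m i a).eval ((x:ℂ)^2) := fun a => by
          rw [hΛentry]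
          simp [Polynomial.eval_mul, Polynomial.expand_eval]
        have hsum : (∑ a, (Fp m i a).eval (((x^2:ℝ)):ℂ) * UWeight W (x^2) a b)
            = (x:ℂ) * ∑ a, (Fp m i a).eval ((x:ℂ)^2) * W x a b := by
          rw [Finset.mul_sum]
          refine Finset.sum_congr rfl fun a _ => ?_
          unfold UWeight
          rw [Matrix.smul_apply, Real.sqrt_sq hx0.le, Complex.real_smul]
          push_cast
          ring
        have hsum2 : (∑ a, (Λ i a).eval (x:ℂ) * W x a b)
            = (x:ℂ) * ∑ a, (Fp m i a).eval ((x:ℂ)^2) * W x a b := by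
          rw [Finset.mul_sum]
          refine Finset.sum_congr rfl fun a _ => ?_
          rw [hΛeval a]; ring
        rw [hsum, hsum2, hQoeval, hQoeval2, star_mul',
          show star ((x:ℝ):ℂ) = ((x:ℝ):ℂ) from by rw [Complex.star_def, Complex.conj_ofReal],
          Complex.real_smul]
        ring
      have h1 : (∫ x in Set.Ioi (0:ℝ), g2 x) = ∫ y in Set.Ioi (0:ℝ), f y := by
        rw [← hsubst]
        exact (setIntegral_congr_fun measurableSet_Ioi (fun x hx => (hpt x hx).symm))
      rw [h1, hf]
      rw [MeasureTheory.integral_smul, ← innerW_apply (Set.Ioi 0) (UWeight W) (Fp m) Qo i j,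
        hUinner, smul_zero]
    have hIic : (∫ x in Set.Iic (0:ℝ), g2 x) = ∫ x in Set.Ioi (0:ℝ), g2 x := by
      have hc := integral_comp_neg_Iic (0:ℝ) g2
      rw [neg_zero] at hc
      rw [← hc]
      exact MeasureTheory.integral_congr_ae (MeasureTheory.ae_restrict_of_ae
        (by filter_upwards [heven] with x hx; exact hx.symm))
    rw [← intervalIntegral.integral_Iic_add_Ioi (b := (0:ℝ)) hg2int.integrableOn
      hg2int.integrableOn, hIic, hIoi, add_zero]
  -- D is orthogonal to itself
  have horthD : innerW Set.univ W D D = 0 := by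
    funext i j
    show innerW Set.univ W D D i j = (0 : Matrix (Fin N) (Fin N) ℂ) i j
    rw [innerW_apply, Matrix.zero_apply]
    have hsplit : ∀ x : ℝ, igW W D D i j x
        = igW W (H (2*m+1)) D i j x - igW W Λ D i j x := by
      intro x
      conv_lhs => rw [hD]
      exact igW_sub_left W _ _ D i j x
    simp_rw [hsplit]
    rw [MeasureTheory.integral_sub (int_igW hmomW _ _ i j) (int_igW hmomW _ _ i j)]
    have h1 := congrFun (congrFun (horthH D hDcoeff) i) j
    rw [innerW_apply] at h1
    have h2 := congrFun (congrFun (horthΛ D hDcoeff) i) j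
    rw [innerW_apply] at h2
    have h1' : (∫ x in Set.univ, igW W (H (2*m+1)) D i j x) = 0 := by simpa using h1
    have h2' : (∫ x in Set.univ, igW W Λ D i j x) = 0 := by simpa using h2
    rw [h1', h2', sub_zero]
  -- positivity : D = 0
  have hposae : ∀ᵐ x : ℝ, (W x).PosDef := by
    have := hW.posdef
    rwa [Measure.restrict_univ] at this
  have haeD : ∀ᵐ x : ℝ, ∀ a b : Fin N, (D a b).eval (x:ℂ) = 0 := by
    rw [MeasureTheory.ae_all_iff]
    intro i
    set φ : ℝ → ℂ := igW W D D i i with hφ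
    have hform : ∀ x : ℝ, φ x
        = dotProduct (star (fun b => star ((D i b).eval (x:ℂ))))
            ((W x) *ᵥ (fun b => star ((D i b).eval (x:ℂ)))) := by
      intro x
      rw [hφ]
      simp only [igW, dotProduct, Matrix.mulVec, Pi.star_apply, star_star]
      simp_rw [Finset.sum_mul, Finset.mul_sum]
      rw [Finset.sum_comm]
      exact Finset.sum_congr rfl fun a _ => Finset.sum_congr rfl fun b _ => by ring
    have hφint : Integrable φ := by
      have := int_igW hmomW D D i i
      rwa [integrableOn_univ] at this
    have hφ0 : (∫ x : ℝ, φ x) = 0 := by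
      have h0 := congrFun (congrFun horthD i) i
      rw [innerW_apply, MeasureTheory.setIntegral_univ] at h0
      simpa using h0
    have hφnn : ∀ᵐ x : ℝ, 0 ≤ φ x := by
      filter_upwards [hposae] with x hx
      rw [hform x]
      exact hx.posSemidef.dotProduct_mulVec_nonneg _
    have hreint : Integrable (fun x : ℝ => (φ x).re) := hφint.re
    have hre0 : (∫ x : ℝ, (φ x).re) = 0 := by
      have h1 : (∫ x : ℝ, RCLike.re (φ x)) = RCLike.re (∫ x : ℝ, φ x) :=
        _root_.integral_re hφint
      rw [hφ0] at h1
      simpa using h1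
    have hrenn : 0 ≤ᵐ[volume] (fun x : ℝ => (φ x).re) := by
      filter_upwards [hφnn] with x hx
      simpa using (Complex.le_def.mp hx).1
    have hre_ae := (MeasureTheory.integral_eq_zero_iff_of_nonneg_ae hrenn hreint).mp hre0
    filter_upwards [hposae, hre_ae, hφnn] with x hx hre hnn
    have hφx : φ x = 0 := by
      apply Complex.ext
      · simpa using hre
      · simpa using (Complex.le_def.mp hnn).2.symm
    intro b
    by_contra hbne
    have hvne : (fun b' => star ((D i b').eval (x:ℂ))) ≠ 0 := by
      intro h0
      have hb := congrFun h0 b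
      rw [Pi.zero_apply, star_eq_zero] at hb
      exact hbne hb
    have hlt := hx.dotProduct_mulVec_pos hvne
    rw [← hform x, hφx] at hlt
    exact lt_irrefl _ hlt
  have hD0 : D = 0 := matpoly_zero_of_ae haeD
  have hfin : H (2*m+1) - Λ = 0 := hD0
  exact sub_eq_zero.mp hfin

end MatrixSide

lemma applyOp_entry {N : ℕ} (s : ℕ) (F : ℕ → MatPoly N) (p : Polynomial ℂ) (i j : Fin N) :
    applyOp s F (p • (1 : MatPoly N)) i j
      = ∑ k ∈ Finset.range (s+1), derivative^[k] p * F k i j := by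
  unfold applyOp
  rw [Matrix.sum_apply]
  refine Finset.sum_congr rfl fun k _ => ?_
  rw [Matrix.mul_apply]
  have hder : ∀ a, iterDerivM k (p • (1 : MatPoly N)) i a
      = if i = a then derivative^[k] p else 0 := by
    intro a
    show (fun q : Polynomial ℂ => Polynomial.derivative q)^[k] ((p • (1 : MatPoly N)) i a) = _
    have h1 : (p • (1 : MatPoly N)) i a = if i = a then p else 0 := by
      rw [Matrix.smul_apply, Matrix.one_apply]
      split_ifs <;> simp [smul_eq_mul]
    rw [h1]
    split_ifs with hia
    · rfl
    · exact Function.iterate_fixed (by simp) k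
  simp_rw [hder, ite_mul, zero_mul]
  rw [Finset.sum_ite_eq Finset.univ i (fun a => derivative^[k] p * F k a j)]
  simp



/-- Let `W(x) = W(-x)` a.e. with monic orthogonal polynomials `H`,
`U(y) = y^{1/2} W(√y)` with monic orthogonal polynomials `Fp`, `h` the monic scalar
Hermite polynomials (weight `e^{-x²}` on `ℝ`) and `ℓ` the monic scalar Laguerre
polynomials of parameter `1/2` (weight `y^{1/2} e^{-y}` on `(0,∞)`).  If a
differential operator `𝒱 = ∑_{j=0}^s (d^j/dx^j) F_j` and invertible matrices `A_n`
satisfy `(h_n I) · 𝒱 = A_n H_n` for all `n`, then there is a differential operator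
`ℰ̃` with matrix polynomial coefficients with `(ℓ_n I) · ℰ̃ = A_{2n+1} Fp_n` for all
`n`; in particular `U` is a Darboux transformation of `y^{1/2} e^{-y} I`. -/
theorem stmt13 {N : ℕ} (W : ℝ → Matrix (Fin N) (Fin N) ℂ)
    (hW : IsWeight Set.univ W)
    (hsymm : ∀ᵐ x : ℝ, W x = W (-x))
    (H : ℕ → MatPoly N) (hH : MonicOPS Set.univ W H)
    (Fp : ℕ → MatPoly N) (hFp : MonicOPS (Set.Ioi 0) (UWeight W) Fp)
    (h : ℕ → Polynomial ℝ)
    (hh : ScalarMonicOPS Set.univ (fun x => Real.exp (-x ^ 2)) h)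
    (ℓ : ℕ → Polynomial ℝ)
    (hℓ : ScalarMonicOPS (Set.Ioi 0)
      (fun y => Real.sqrt y * Real.exp (-y)) ℓ)
    (s : ℕ) (F : ℕ → MatPoly N) (A : ℕ → Matrix (Fin N) (Fin N) ℂ)
    (hA : ∀ n, IsUnit (A n))
    (hV : ∀ n : ℕ,
      applyOp s F (((h n).map (algebraMap ℝ ℂ)) • (1 : MatPoly N))
        = constM (A n) * H n) :
    ∃ (t : ℕ) (G : ℕ → MatPoly N),
      ∀ n : ℕ,
        applyOp t G (((ℓ n).map (algebraMap ℝ ℂ)) • (1 : MatPoly N))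
          = constM (A (2 * n + 1)) * Fp n := by
  choose cc hcc0 hccspec using fun j => exists_op (R := ℂ) j
  refine ⟨s, fun k => fun i j => ∑ jj ∈ Finset.range (s+1), cc jj k *
      (if Even jj then evp (F jj i j) else odp (F jj i j)), fun n => ?_⟩
  set ℓc : Polynomial ℂ := (ℓ n).map (algebraMap ℝ ℂ) with hℓc
  have hkeyA : (h (2*n+1)).map (algebraMap ℝ ℂ) = X * expand ℂ 2 ℓc := by
    rw [keyA hh hℓ n, Polynomial.map_mul, Polynomial.map_X, Polynomial.map_expand]
  have hkeyB : H (2*n+1) = XmulM (compSqM (Fp n)) := keyB W hW hsymm H hH Fp hFp n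
  funext i j
  set Sc : ℕ → Polynomial ℂ :=
    fun jj => ∑ k ∈ Finset.range (jj+1), derivative^[k] ℓc * cc jj k with hSc
  set R : Polynomial ℂ := ∑ a, Polynomial.C (A (2*n+1) i a) * Fp n a j with hR
  -- the entrywise form of the hypothesis
  have hEntry : expand ℂ 2 (∑ jj ∈ Finset.range (s+1),
        (if Even jj then X * Sc jj * odp (F jj i j) else Sc jj * evp (F jj i j)))
      + X * expand ℂ 2 (∑ jj ∈ Finset.range (s+1),
        Sc jj * (if Even jj then evp (F jj i j) else odp (F jj i j)))
      = expand ℂ 2 0 + X * expand ℂ 2 R := by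
    have e1 := congrFun (congrFun (hV (2*n+1)) i) j
    rw [applyOp_entry, hkeyA, hkeyB, Matrix.mul_apply] at e1
    have hL : ∑ k ∈ Finset.range (s+1), derivative^[k] (X * expand ℂ 2 ℓc) * F k i j
        = expand ℂ 2 (∑ jj ∈ Finset.range (s+1),
            (if Even jj then X * Sc jj * odp (F jj i j) else Sc jj * evp (F jj i j)))
          + X * expand ℂ 2 (∑ jj ∈ Finset.range (s+1),
            Sc jj * (if Even jj then evp (F jj i j) else odp (F jj i j))) := by
      rw [map_sum, map_sum, Finset.mul_sum, ← Finset.sum_add_distrib]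
      refine Finset.sum_congr rfl fun jj _ => ?_
      rw [hccspec jj ℓc]
      by_cases hjj : Even jj
      · rw [if_pos hjj, if_pos hjj, if_pos hjj]
        conv_lhs => rw [← evp_add_odp (F jj i j)]
        simp only [_root_.map_mul, expand_X]
        ring
      · rw [if_neg hjj, if_neg hjj, if_neg hjj]
        conv_lhs => rw [← evp_add_odp (F jj i j)]
        simp only [_root_.map_mul, expand_X]
        ring
    have hRR : (∑ a, constM (A (2*n+1)) i a * XmulM (compSqM (Fp n)) a j)
        = expand ℂ 2 0 + X * expand ℂ 2 R := by
      rw [map_zero, zero_add, hR, map_sum, Finset.mul_sum]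
      refine Finset.sum_congr rfl fun a _ => ?_
      show Polynomial.C (A (2*n+1) i a) * (X * (Fp n a j).comp (X^2)) = _
      rw [show ((Fp n a j).comp (X^2) : Polynomial ℂ) = expand ℂ 2 (Fp n a j) from rfl]
      rw [_root_.map_mul, expand_C]
      ring
    rw [← hL, ← hRR]
    exact e1
  have hVR : (∑ jj ∈ Finset.range (s+1),
      Sc jj * (if Even jj then evp (F jj i j) else odp (F jj i j))) = R := by
    have h0 := congrArg odp hEntry
    rwa [odp_decomp, odp_decomp] at h0
  -- now compute the goal entry
  refine (applyOp_entry s _ ℓc i j).trans ?_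
  show (∑ k ∈ Finset.range (s+1), derivative^[k] ℓc * ∑ jj ∈ Finset.range (s+1), cc jj k *
      (if Even jj then evp (F jj i j) else odp (F jj i j)))
    = (constM (A (2*n+1)) * Fp n) i j
  rw [Matrix.mul_apply]
  have hgoalR : (∑ a, constM (A (2*n+1)) i a * Fp n a j) = R := by
    rw [hR]
    refine Finset.sum_congr rfl fun a _ => ?_
    rfl
  rw [hgoalR, ← hVR]
  simp_rw [Finset.mul_sum]
  rw [Finset.sum_comm]
  refine Finset.sum_congr rfl fun jj hjj => ?_
  have hsubsum : (∑ k ∈ Finset.range (s+1), derivative^[k] ℓc * cc jj k) = Sc jj := by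
    rw [hSc]
    refine (Finset.sum_subset ?_ ?_).symm
    · exact Finset.range_subset_range.mpr (by
        have := Finset.mem_range.mp hjj
        omega)
    · intro k _ hk
      have hjk : jj < k := by
        rw [Finset.mem_range] at hk
        omega
      rw [hcc0 jj k hjk, mul_zero]
  rw [← hsubsum, Finset.sum_mul]
  refine Finset.sum_congr rfl fun k _ => ?_
  ring
end
end

section
/- Let a, b be real numbers with a² + b² > 0 and let W be the 3×3 weight matrix on ℝ given by W(x) = e^{−x²} [[1 + a²x⁴, abx⁴, ax²], [abx⁴, 1 + b²x⁴, bx²], [ax², bx², 1]]. Let D be the differential operator D = (d²/dx²) I + (d/dx) 2x·M + A₀, where M = [[−1, 0, 2a], [0, −1, 2b], [0, 0, −1]] and A₀ = [[−4, 0, 2a], [0, −4, 2b], [0, 0, 0]], acting on the right on 3×3 matrix polynomials by (P·D)(x) = P''(x) + 2x·P'(x)·M + P(x)·A₀. Then D is W-symmetric: ∫_ℝ (P·D)(x) W(x) Q(x)^* dx = ∫_ℝ P(x) W(x) ((Q·D)(x))^* dx for all 3×3 matrix polynomials P and Q. -/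
open MeasureTheory Polynomial Set Matrix
open scoped ComplexOrder

noncomputable section

/-- The 3×3 Hermite-type weight
`W(x) = e^{-x²} [[1+a²x⁴, abx⁴, ax²], [abx⁴, 1+b²x⁴, bx²], [ax², bx², 1]]`. -/
def W16 (a b : ℝ) (x : ℝ) : Matrix (Fin 3) (Fin 3) ℂ :=
  Real.exp (-x ^ 2) •
    !![((1 + a ^ 2 * x ^ 4 : ℝ) : ℂ), ((a * b * x ^ 4 : ℝ) : ℂ), ((a * x ^ 2 : ℝ) : ℂ);
       ((a * b * x ^ 4 : ℝ) : ℂ), ((1 + b ^ 2 * x ^ 4 : ℝ) : ℂ), ((b * x ^ 2 : ℝ) : ℂ);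
       ((a * x ^ 2 : ℝ) : ℂ), ((b * x ^ 2 : ℝ) : ℂ), 1]

/-- The matrix `M = [[-1,0,2a],[0,-1,2b],[0,0,-1]]`. -/
def M16 (a b : ℝ) : Matrix (Fin 3) (Fin 3) ℂ :=
  !![-1, 0, 2 * (a : ℂ); 0, -1, 2 * (b : ℂ); 0, 0, -1]

/-- The matrix `A₀ = [[-4,0,2a],[0,-4,2b],[0,0,0]]`. -/
def A016 (a b : ℝ) : Matrix (Fin 3) (Fin 3) ℂ :=
  !![-4, 0, 2 * (a : ℂ); 0, -4, 2 * (b : ℂ); 0, 0, 0]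

/-- The right action of `D = (d²/dx²) I + (d/dx) 2x·M + A₀`:
`(P·D)(x) = P''(x) + 2x·P'(x)·M + P(x)·A₀`. -/
def opD16 (a b : ℝ) (P : MatPoly 3) : MatPoly 3 :=
  derivM (derivM P) + XmulM (derivM P) * constM ((2 : ℂ) • M16 a b)
    + P * constM (A016 a b)


lemma gauss_pow_integrable (k : ℕ) :
    Integrable (fun x : ℝ => x ^ k * Real.exp (-x ^ 2)) := by
  have hg : Integrable (fun x : ℝ => (k.factorial * Real.exp (1/2)) * Real.exp (-(1/2) * x ^ 2)) :=
    (integrable_exp_neg_mul_sq (by norm_num : (0:ℝ) < 1/2)).const_mul _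
  refine hg.mono' ?_ ?_
  · exact (continuous_pow k |>.mul (Real.continuous_exp.comp (continuous_pow 2).neg)).aestronglyMeasurable
  · refine Filter.Eventually.of_forall fun x => ?_
    rw [Real.norm_eq_abs, abs_mul, abs_of_nonneg (Real.exp_pos _).le, abs_pow]
    have h1 : |x| ^ k ≤ k.factorial * Real.exp |x| := by
      have : |x| ^ k / k.factorial ≤ Real.exp |x| := Real.pow_div_factorial_le_exp |x| (abs_nonneg x) k
      calc |x| ^ k = k.factorial * (|x| ^ k / k.factorial) := by
            field_simp
        _ ≤ k.factorial * Real.exp |x| := by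
            exact mul_le_mul_of_nonneg_left this (by positivity)
    calc |x| ^ k * Real.exp (-x ^ 2) ≤ (k.factorial * Real.exp |x|) * Real.exp (-x ^ 2) :=
          mul_le_mul_of_nonneg_right h1 (Real.exp_pos _).le
      _ = k.factorial * Real.exp (|x| - x ^ 2) := by rw [mul_assoc, ← Real.exp_add]; ring_nf
      _ ≤ k.factorial * Real.exp (1/2 + -(1/2) * x^2) := by
          apply mul_le_mul_of_nonneg_left _ (by positivity)
          apply Real.exp_le_exp.2
          nlinarith [sq_nonneg (|x| - 1), sq_abs x]
      _ = (k.factorial * Real.exp (1/2)) * Real.exp (-(1/2) * x ^ 2) := by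
          rw [Real.exp_add]; ring

lemma intPoly (p : Polynomial ℂ) :
    Integrable (fun x : ℝ => Real.exp (-x ^ 2) • Polynomial.eval (x : ℂ) p) := by
  have : (fun x : ℝ => Real.exp (-x ^ 2) • Polynomial.eval (x : ℂ) p)
      = fun x : ℝ => ∑ k ∈ Finset.range (p.natDegree + 1),
          p.coeff k * (((x ^ k * Real.exp (-x ^ 2) : ℝ) : ℂ)) := by
    funext x
    rw [Polynomial.eval_eq_sum_range, Finset.smul_sum]
    refine Finset.sum_congr rfl fun k _ => ?_
    push_cast
    rw [Complex.real_smul]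
    push_cast
    ring
  rw [this]
  apply integrable_finset_sum
  intro k _
  exact ((gauss_pow_integrable k).ofReal.const_mul _)

lemma ftcPoly (r : Polynomial ℂ) :
    ∫ x : ℝ, Real.exp (-x ^ 2) • Polynomial.eval (x : ℂ)
        (Polynomial.derivative r - 2 * (Polynomial.X * r)) = 0 := by
  apply integral_eq_zero_of_hasDerivAt_of_integrable
      (f := fun x : ℝ => Real.exp (-x ^ 2) • Polynomial.eval (x : ℂ) r)
  · intro x
    have h1 : HasDerivAt (fun x : ℝ => Real.exp (-x ^ 2))
        (Real.exp (-x ^ 2) * (-(2 * x))) x := by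
      simpa using (((hasDerivAt_pow 2 x).neg).exp)
    have h2 : HasDerivAt (fun x : ℝ => Polynomial.eval (x : ℂ) r)
        (Polynomial.eval (x : ℂ) (Polynomial.derivative r)) x :=
      (r.hasDerivAt (x : ℂ)).comp_ofReal
    have := h1.smul h2
    convert this using 1
    · rfl
    simp only [Polynomial.eval_sub, Polynomial.eval_mul, Polynomial.eval_X,
      Polynomial.eval_ofNat, smul_sub]
    rw [sub_eq_add_neg]
    congr 1
    rw [Complex.real_smul, Complex.real_smul]
    push_cast
    ring
  · exact intPoly _
  · exact intPoly _


/-- Conjugate transpose of a matrix polynomial. -/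
def starMP (Q : MatPoly 3) : MatPoly 3 := fun i j => (Q j i).map (starRingEnd ℂ)

/-- Polynomial part of `W16`. -/
def Wq (a b : ℝ) : MatPoly 3 :=
  !![Polynomial.C 1 + Polynomial.C ((a:ℂ)^2) * Polynomial.X^4,
       Polynomial.C ((a:ℂ)*(b:ℂ)) * Polynomial.X^4, Polynomial.C (a:ℂ) * Polynomial.X^2;
     Polynomial.C ((a:ℂ)*(b:ℂ)) * Polynomial.X^4,
       Polynomial.C 1 + Polynomial.C ((b:ℂ)^2) * Polynomial.X^4, Polynomial.C (b:ℂ) * Polynomial.X^2;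
     Polynomial.C (a:ℂ) * Polynomial.X^2, Polynomial.C (b:ℂ) * Polynomial.X^2, Polynomial.C 1]

def Kc (a b : ℝ) : Matrix (Fin 3) (Fin 3) ℂ :=
  !![0, 0, (a:ℂ); 0, 0, (b:ℂ); -(a:ℂ), -(b:ℂ), 0]

def Rmat (a b : ℝ) (P S : MatPoly 3) : MatPoly 3 :=
  derivM P * Wq a b * S - P * Wq a b * derivM S
    + XmulM (P * constM ((2:ℂ) • Kc a b) * S)

lemma evalM_mul (P Q : MatPoly 3) (x : ℝ) :
    evalM (P * Q) x = evalM P x * evalM Q x := by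
  ext i j
  simp [evalM, Matrix.mul_apply, Polynomial.eval_finset_sum]

lemma starMP_eval (Q : MatPoly 3) (x : ℝ) :
    evalM (starMP Q) x = (evalM Q x)ᴴ := by
  have key : ∀ p : Polynomial ℂ, (p.map (starRingEnd ℂ)).eval (x:ℂ) = star (p.eval (x:ℂ)) := by
    intro p
    induction p using Polynomial.induction_on' with
    | add p q hp hq => simp [hp, hq]
    | monomial n c =>
        simp [Polynomial.map_monomial, Complex.conj_ofReal]
  ext i j
  simp [evalM, starMP, Matrix.conjTranspose_apply, key]

lemma W16_eq (a b : ℝ) (x : ℝ) :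
    W16 a b x = Real.exp (-x ^ 2) • evalM (Wq a b) x := by
  refine Matrix.ext fun i j => ?_
  fin_cases i <;> fin_cases j <;>
    simp [W16, Wq, evalM, Complex.real_smul] <;> push_cast <;> ring

lemma star_opD (a b : ℝ) (Q : MatPoly 3) :
    starMP (opD16 a b Q) =
      derivM (derivM (starMP Q))
        + constM ((2:ℂ) • (M16 a b)ᴴ) * XmulM (derivM (starMP Q))
        + constM ((A016 a b)ᴴ) * starMP Q := by
  refine Matrix.ext fun i j => ?_
  fin_cases i <;> fin_cases j <;>
    simp [starMP, opD16, derivM, XmulM, constM, M16, A016, Matrix.mul_apply,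
      Matrix.conjTranspose_apply, Matrix.smul_apply, smul_eq_mul,
      Fin.sum_univ_three, Polynomial.derivative_map, Complex.conj_ofReal, map_ofNat,
      Matrix.vecHead, Matrix.vecTail, Function.comp] <;>
    ring

set_option maxHeartbeats 4000000 in
lemma key_identity (a b : ℝ) (P S : MatPoly 3) :
    opD16 a b P * Wq a b * S
      - P * Wq a b * (derivM (derivM S)
          + constM ((2:ℂ) • (M16 a b)ᴴ) * XmulM (derivM S)
          + constM ((A016 a b)ᴴ) * S)
    = derivM (Rmat a b P S) - (2 : Polynomial ℂ) • XmulM (Rmat a b P S) := by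
  refine Matrix.ext fun i j => ?_
  fin_cases i <;> fin_cases j <;>
    (simp only [Rmat, opD16, derivM, XmulM, constM, Matrix.mul_apply, Fin.sum_univ_three,
       Matrix.map_apply, Matrix.smul_apply, Matrix.add_apply, Matrix.sub_apply]
     simp [Wq, Kc, M16, A016, smul_eq_mul, map_ofNat, Polynomial.derivative_pow,
       Polynomial.derivative_C, Polynomial.derivative_ofNat, Complex.conj_ofReal,
       Matrix.conjTranspose_apply, Matrix.vecHead, Matrix.vecTail, Function.comp]
     ring)

/-- The operator `D` is `W`-symmetric for the 3×3 Hermite-type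
weight `W16 a b` on `ℝ`:
`∫_ℝ (P·D)(x) W(x) Q(x)^* dx = ∫_ℝ P(x) W(x) ((Q·D)(x))^* dx` for all 3×3 matrix
polynomials `P`, `Q`. -/
theorem stmt16 (a b : ℝ) (hab : a ^ 2 + b ^ 2 > 0) :
    ∀ P Q : MatPoly 3,
      innerW Set.univ (W16 a b) (opD16 a b P) Q
        = innerW Set.univ (W16 a b) P (opD16 a b Q) := by
  intro P Q
  have hrep : ∀ (A B : MatPoly 3) (i j : Fin 3),
      innerW Set.univ (W16 a b) A B i j
        = ∫ x : ℝ, Real.exp (-x ^ 2) •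
            Polynomial.eval (x:ℂ) ((A * Wq a b * starMP B) i j) := by
    intro A B i j
    show (∫ x in Set.univ, (evalM A x * W16 a b x * (evalM B x)ᴴ) i j) = _
    rw [setIntegral_univ]
    congr 1
    funext x
    rw [W16_eq, ← starMP_eval]
    rw [Matrix.mul_smul, Matrix.smul_mul, Matrix.smul_apply]
    rw [← evalM_mul, ← evalM_mul]
    rfl
  ext i j
  rw [hrep (opD16 a b P) Q i j, hrep P (opD16 a b Q) i j]
  rw [← sub_eq_zero, ← integral_sub (intPoly _) (intPoly _)]
  have hmat : opD16 a b P * Wq a b * starMP Q - P * Wq a b * starMP (opD16 a b Q)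
      = derivM (Rmat a b P (starMP Q))
        - (2 : Polynomial ℂ) • XmulM (Rmat a b P (starMP Q)) := by
    rw [star_opD]
    exact key_identity a b P (starMP Q)
  have hentry : (opD16 a b P * Wq a b * starMP Q
        - P * Wq a b * starMP (opD16 a b Q)) i j
      = Polynomial.derivative (Rmat a b P (starMP Q) i j)
        - 2 * (Polynomial.X * (Rmat a b P (starMP Q) i j)) := by
    have h := congrFun (congrFun hmat i) j
    simpa [derivM, XmulM, Matrix.sub_apply, Matrix.smul_apply, smul_eq_mul] using h
  have hfun : (fun x : ℝ => Real.exp (-x ^ 2) •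
        Polynomial.eval (x:ℂ) ((opD16 a b P * Wq a b * starMP Q) i j)
      - Real.exp (-x ^ 2) •
        Polynomial.eval (x:ℂ) ((P * Wq a b * starMP (opD16 a b Q)) i j))
      = fun x : ℝ => Real.exp (-x ^ 2) • Polynomial.eval (x:ℂ)
          (Polynomial.derivative (Rmat a b P (starMP Q) i j)
            - 2 * (Polynomial.X * (Rmat a b P (starMP Q) i j))) := by
    funext x
    rw [← smul_sub, ← Polynomial.eval_sub, ← Matrix.sub_apply, hentry]
  rw [hfun]
  exact ftcPoly _
end
end
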